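/- arXiv:1508.02977 — 2 statements merged into one kernel-verified Lean document; each statement's English description precedes it below -/
import Mathlib

section
/- Let H be a real Hilbert space with two bounded coercive symmetric bilinear forms a and b satisfying b(v,v) ≤ a(v,v) for all v. Let u_a and u_b solve a(u_a, v) = F(v) and b(u_b, v) = F(v) for all v ∈ H, for a fixed continuous linear functional F. Then a(u_a - u_b, u_a - u_b) ≤ (a - b)(u_b, u_b) + 2|(a−b)(u_b, u_a − u_b)|, and in particular if a − b is positive semidefinite then the energy error a(u_a − u_b, u_a − u_b)^{1/2} is bounded by a constant times ((a−b)(u_b,u_b))^{1/2}. -/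
/-- Model-perturbation estimate for variational solutions of two nested symmetric
bounded coercive bilinear forms. -/
theorem model_perturbation_estimate
    {H : Type*} [NormedAddCommGroup H] [InnerProductSpace ℝ H] [CompleteSpace H]
    (a b : H →ₗ[ℝ] H →ₗ[ℝ] ℝ)
    (hasymm : ∀ u v, a u v = a v u) (hbsymm : ∀ u v, b u v = b v u)
    (Ca Cb : ℝ) (habdd : ∀ u v, |a u v| ≤ Ca * ‖u‖ * ‖v‖)
    (hbbdd : ∀ u v, |b u v| ≤ Cb * ‖u‖ * ‖v‖)
    (ca cb : ℝ) (hca : 0 < ca) (hcb : 0 < cb)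
    (hacoer : ∀ v, ca * ‖v‖ ^ 2 ≤ a v v) (hbcoer : ∀ v, cb * ‖v‖ ^ 2 ≤ b v v)
    (hba : ∀ v, b v v ≤ a v v)
    (F : H →L[ℝ] ℝ) (ua ub : H)
    (hua : ∀ v, a ua v = F v) (hub : ∀ v, b ub v = F v) :
    a (ua - ub) (ua - ub) ≤
      (a ub ub - b ub ub) + 2 * |a ub (ua - ub) - b ub (ua - ub)| ∧
    ((∀ v, 0 ≤ a v v - b v v) →
      ∃ K : ℝ, 0 < K ∧
        Real.sqrt (a (ua - ub) (ua - ub)) ≤ K * Real.sqrt (a ub ub - b ub ub)) := by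
  set e := ua - ub with he
  have hkey : a e e = -(a ub e - b ub e) := by
    have h1 : a ua e = F e := hua e
    have h2 : b ub e = F e := hub e
    have h3 : a e e = a ua e - a ub e := by
      rw [he, map_sub]; simp only [LinearMap.sub_apply, map_sub]; ring
    linarith
  have hδ : 0 ≤ a ub ub - b ub ub := by have := hba ub; linarith
  have habs : -(a ub e - b ub e) ≤ |a ub e - b ub e| := neg_le_abs _
  have habs0 : 0 ≤ |a ub e - b ub e| := abs_nonneg _
  constructor
  · linarith
  · intro hsd
    refine ⟨1, one_pos, ?_⟩
    rw [one_mul]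
    apply Real.sqrt_le_sqrt
    -- Cauchy-Schwarz for the semidefinite form a - b
    set A := a e e - b e e with hA
    set B := a ub e - b ub e with hB
    set C := a ub ub - b ub ub with hC
    have hpos : ∀ t : ℝ, 0 ≤ A * (t * t) + (2 * B) * t + C := by
      intro t
      have h := hsd (ub + t • e)
      have hsa : a e ub = a ub e := hasymm e ub
      have hsb : b e ub = b ub e := hbsymm e ub
      simp only [map_add, map_smul, LinearMap.add_apply, LinearMap.smul_apply,
        smul_eq_mul] at h
      simp only [hA, hB, hC]
      rw [hsa, hsb] at h
      nlinarith [h]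
    have hdisc := discrim_le_zero hpos
    rw [discrim] at hdisc
    -- (2B)^2 - 4AC ≤ 0
    have hbee : 0 ≤ b e e := le_trans (by positivity) (hbcoer e)
    have haee : 0 ≤ a e e := le_trans (by positivity) (hacoer e)
    have hB2 : B ^ 2 ≤ A * C := by nlinarith
    have hAle : A ≤ a e e := by simp only [hA]; linarith
    have hsq : (a e e) ^ 2 ≤ (a e e) * C := by
      have : (a e e) ^ 2 = B ^ 2 := by rw [hkey]; ring
      nlinarith
    by_contra hcon
    push_neg at hcon
    nlinarith
end

section
/- Let Ω = Ω₁ ∪ Ω₂ be an overlapping decomposition of a domain with Ω₁ ∩ Ω₂ nonempty and open. In the abstract Schwarz framework: let H be a Hilbert space, a a symmetric bounded coercive bilinear form, and P₁, P₂ the a-orthogonal projections onto closed subspaces H₁, H₂ with H = H₁ + H₂. Then the error propagation operator E = (I − P₂)(I − P₁) of the multiplicative Schwarz method satisfies ‖E‖_a < 1, where ‖·‖_a is the energy norm; consequently the Schwarz iteration converges geometrically to the exact solution. -/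
/-- Abstract convergence of the multiplicative overlapping Schwarz method: if
`H = H₁ + H₂` with `P₁, P₂` the `a`-orthogonal projections onto the closed subspaces
`H₁, H₂`, then the error propagation operator `E = (I − P₂)(I − P₁)` is a strict
contraction in the energy norm, so the Schwarz iteration converges geometrically. -/
theorem schwarz_error_propagation_contraction
    {H : Type*} [NormedAddCommGroup H] [InnerProductSpace ℝ H] [CompleteSpace H]
    (a : H →ₗ[ℝ] H →ₗ[ℝ] ℝ)
    (hsymm : ∀ u v, a u v = a v u)
    (C c : ℝ) (hc : 0 < c)
    (hbdd : ∀ u v, |a u v| ≤ C * ‖u‖ * ‖v‖)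
    (hcoer : ∀ u, c * ‖u‖ ^ 2 ≤ a u u)
    (H₁ H₂ : Submodule ℝ H) (hH₁ : IsClosed (H₁ : Set H)) (hH₂ : IsClosed (H₂ : Set H))
    (hsum : H₁ ⊔ H₂ = ⊤)
    (P₁ P₂ : H →ₗ[ℝ] H)
    (hP₁mem : ∀ u, P₁ u ∈ H₁) (hP₁orth : ∀ u, ∀ v ∈ H₁, a (u - P₁ u) v = 0)
    (hP₂mem : ∀ u, P₂ u ∈ H₂) (hP₂orth : ∀ u, ∀ v ∈ H₂, a (u - P₂ u) v = 0)
    (E : H → H) (hE : ∀ u, E u = (u - P₁ u) - P₂ (u - P₁ u)) :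
    ∃ ρ : ℝ, 0 ≤ ρ ∧ ρ < 1 ∧
      (∀ u, Real.sqrt (a (E u) (E u)) ≤ ρ * Real.sqrt (a u u)) ∧
      (∀ u (k : ℕ), Real.sqrt (a (E^[k] u) (E^[k] u)) ≤ ρ ^ k * Real.sqrt (a u u)) := by
  classical
  -- positivity of the energy form
  have hpos : ∀ u, (0:ℝ) ≤ a u u := by
    intro u
    have h1 : (0:ℝ) ≤ c * ‖u‖ ^ 2 := by positivity
    linarith [hcoer u]
  -- expansion of a on differences
  have expand : ∀ x y : H, a (x - y) (x - y) = a x x - 2 * a x y + a y y := by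
    intro x y
    simp only [map_sub, LinearMap.sub_apply]
    rw [hsymm y x]; ring
  -- Cauchy-Schwarz for a
  have hCS : ∀ x y : H, (a x y)^2 ≤ a x x * a y y := by
    intro x y
    by_cases hy : y = 0
    · simp [hy]
    · have hy' : 0 < ‖y‖ := norm_pos_iff.mpr hy
      have hq : 0 < a y y := lt_of_lt_of_le (by positivity) (hcoer y)
      have hexp : a ((a y y) • x - (a x y) • y) ((a y y) • x - (a x y) • y)
          = (a y y)^2 * a x x - 2*(a y y)*(a x y)^2 + (a x y)^2 * (a y y) := by
        simp only [map_sub, map_smul, LinearMap.sub_apply, LinearMap.smul_apply,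
          smul_eq_mul]
        rw [hsymm y x]; ring
      have h0 : (0:ℝ) ≤ (a y y)^2 * a x x - 2*(a y y)*(a x y)^2 + (a x y)^2 * (a y y) := by
        rw [← hexp]; exact hpos _
      nlinarith [hq, sq_nonneg (a x y), mul_pos hq hq]
  -- stable decomposition via the open mapping theorem
  obtain ⟨M, hM, hMap⟩ :
      ∃ M : ℝ, 0 < M ∧ ∀ w : H, ∃ v₁ ∈ H₁, ∃ v₂ ∈ H₂,
        w = v₁ + v₂ ∧ ‖v₂‖ ≤ M * ‖w‖ := by
    have : CompleteSpace H₁ := hH₁.completeSpace_coe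
    have : CompleteSpace H₂ := hH₂.completeSpace_coe
    let f : (H₁ × H₂) →L[ℝ] H := (H₁.subtypeL).coprod (H₂.subtypeL)
    have hsurj : Function.Surjective f := by
      intro u
      have hu : u ∈ H₁ ⊔ H₂ := hsum ▸ Submodule.mem_top
      rcases Submodule.mem_sup.1 hu with ⟨y, hy, z, hz, rfl⟩
      exact ⟨(⟨y, hy⟩, ⟨z, hz⟩), rfl⟩
    obtain ⟨M, hM, hMap⟩ := f.exists_preimage_norm_le hsurj
    refine ⟨M, hM, fun w => ?_⟩
    obtain ⟨x, hx, hxn⟩ := hMap w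
    refine ⟨(x.1 : H), x.1.2, (x.2 : H), x.2.2, ?_, ?_⟩
    · rw [← hx]; rfl
    · exact le_trans (norm_snd_le x) hxn
  -- the constant D
  set D : ℝ := max 1 (max C 0 * M^2 / c) with hD
  have hD1 : (1:ℝ) ≤ D := le_max_left _ _
  have hD0 : (0:ℝ) < D := lt_of_lt_of_le one_pos hD1
  -- key lemma: for w ⊥ₐ H₁, a w w ≤ D * a (P₂ w) (P₂ w)
  have key : ∀ w : H, (∀ v ∈ H₁, a w v = 0) → a w w ≤ D * a (P₂ w) (P₂ w) := by
    intro w hw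
    obtain ⟨v₁, hv₁, v₂, hv₂, hw_eq, hn2⟩ := hMap w
    -- a w w = a (P₂ w) v₂
    have e1 : a w v₁ = 0 := hw _ hv₁
    have e2 : a w v₂ = a (P₂ w) v₂ := by
      have h := hP₂orth w v₂ hv₂
      simp only [map_sub, LinearMap.sub_apply] at h
      linarith
    have h1 : a w w = a (P₂ w) v₂ := by
      have : a w w = a w v₁ + a w v₂ := by
        nth_rewrite 2 [hw_eq]
        rw [map_add]
      rw [this, e1, e2]; ring
    -- bound a v₂ v₂ by D * a w w
    have hv2bound : a v₂ v₂ ≤ D * a w w := by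
      have b1 : a v₂ v₂ ≤ max C 0 * ‖v₂‖ * ‖v₂‖ := by
        have := hbdd v₂ v₂
        have h2 : C * ‖v₂‖ * ‖v₂‖ ≤ max C 0 * ‖v₂‖ * ‖v₂‖ := by
          have : (0:ℝ) ≤ ‖v₂‖ * ‖v₂‖ := by positivity
          nlinarith [le_max_left C 0]
        calc a v₂ v₂ ≤ |a v₂ v₂| := le_abs_self _
          _ ≤ C * ‖v₂‖ * ‖v₂‖ := this
          _ ≤ _ := h2
      have b2 : max C 0 * ‖v₂‖ * ‖v₂‖ ≤ max C 0 * M^2 * ‖w‖^2 := by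
        have h0 : (0:ℝ) ≤ max C 0 := le_max_right _ _
        have hsq : ‖v₂‖ * ‖v₂‖ ≤ (M * ‖w‖) * (M * ‖w‖) :=
          mul_le_mul hn2 hn2 (norm_nonneg _) (by positivity)
        nlinarith [mul_le_mul_of_nonneg_left hsq h0]
      have b3 : max C 0 * M^2 * ‖w‖^2 ≤ (max C 0 * M^2 / c) * a w w := by
        have h0 : (0:ℝ) ≤ max C 0 * M^2 := by positivity
        have := hcoer w
        rw [div_mul_eq_mul_div, le_div_iff₀ hc]
        nlinarith
      have b4 : (max C 0 * M^2 / c) * a w w ≤ D * a w w := by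
        have : max C 0 * M^2 / c ≤ D := le_max_right _ _
        exact mul_le_mul_of_nonneg_right this (hpos w)
      linarith
    -- combine via Cauchy-Schwarz
    have hcs := hCS (P₂ w) v₂
    have hsq : (a w w)^2 ≤ a (P₂ w) (P₂ w) * (D * a w w) := by
      calc (a w w)^2 = (a (P₂ w) v₂)^2 := by rw [h1]
        _ ≤ a (P₂ w) (P₂ w) * a v₂ v₂ := hcs
        _ ≤ a (P₂ w) (P₂ w) * (D * a w w) :=
            mul_le_mul_of_nonneg_left hv2bound (hpos _)
    rcases eq_or_lt_of_le (hpos w) with h0 | h0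
    · rw [← h0]
      exact mul_nonneg hD0.le (hpos _)
    · nlinarith [hpos (P₂ w)]
  -- contraction in energy
  have contraction : ∀ u, a (E u) (E u) ≤ (1 - 1/D) * a u u := by
    intro u
    set w : H := u - P₁ u with hwdef
    have hw : ∀ v ∈ H₁, a w v = 0 := fun v hv => hP₁orth u v hv
    have hEu : E u = w - P₂ w := hE u
    have orth2 : a w (P₂ w) = a (P₂ w) (P₂ w) := by
      have h := hP₂orth w (P₂ w) (hP₂mem w)
      simp only [map_sub, LinearMap.sub_apply] at h
      linarith
    have pyth2 : a (E u) (E u) = a w w - a (P₂ w) (P₂ w) := by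
      rw [hEu, expand, orth2]; ring
    have pyth1 : a w w ≤ a u u := by
      have h := expand u (P₁ u)
      have h2 : a u (P₁ u) = a (P₁ u) (P₁ u) := by
        have h3 := hP₁orth u (P₁ u) (hP₁mem u)
        simp only [map_sub, LinearMap.sub_apply] at h3
        linarith
      have := hpos (P₁ u)
      rw [← hwdef] at h
      nlinarith
    have hk := key w hw
    have hd : a w w / D ≤ a (P₂ w) (P₂ w) := by
      rw [div_le_iff₀ hD0, mul_comm]
      exact hk
    have h1D : (0:ℝ) ≤ 1 - 1/D := by
      have : 1/D ≤ 1 := by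
        rw [div_le_one hD0]; exact hD1
      linarith
    calc a (E u) (E u) = a w w - a (P₂ w) (P₂ w) := pyth2
      _ ≤ a w w - a w w / D := by linarith
      _ = (1 - 1/D) * a w w := by ring
      _ ≤ (1 - 1/D) * a u u := mul_le_mul_of_nonneg_left pyth1 h1D
  -- define ρ
  have h1D : (0:ℝ) ≤ 1 - 1/D := by
    have : 1/D ≤ 1 := by rw [div_le_one hD0]; exact hD1
    linarith
  set ρ : ℝ := Real.sqrt (1 - 1/D) with hρdef
  have hρ0 : 0 ≤ ρ := Real.sqrt_nonneg _
  have hρsq : ρ^2 = 1 - 1/D := Real.sq_sqrt h1D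
  have hρ1 : ρ < 1 := by
    have hDpos : (0:ℝ) < 1/D := by positivity
    nlinarith
  have main : ∀ u, Real.sqrt (a (E u) (E u)) ≤ ρ * Real.sqrt (a u u) := by
    intro u
    have h := contraction u
    rw [← hρsq] at h
    calc Real.sqrt (a (E u) (E u)) ≤ Real.sqrt (ρ^2 * a u u) := Real.sqrt_le_sqrt h
      _ = ρ * Real.sqrt (a u u) := by
          rw [Real.sqrt_mul (sq_nonneg ρ), Real.sqrt_sq hρ0]
  refine ⟨ρ, hρ0, hρ1, main, ?_⟩
  intro u k
  induction k with
  | zero => simp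
  | succ k ih =>
    rw [Function.iterate_succ_apply']
    calc Real.sqrt (a (E (E^[k] u)) (E (E^[k] u)))
        ≤ ρ * Real.sqrt (a (E^[k] u) (E^[k] u)) := main _
      _ ≤ ρ * (ρ ^ k * Real.sqrt (a u u)) := mul_le_mul_of_nonneg_left ih hρ0
      _ = ρ ^ (k+1) * Real.sqrt (a u u) := by ring
end
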